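/- Let p, q be distinct primes and n > 1 an integer. In the ring R = Z/p^n q Z, the elements p^{n-1}q and p are adjacent in Γ''_{0,n}(R) but not adjacent in Γ''_{0,n-1}(R); hence Γ''_{0,n-1}(R) ≠ Γ''_{0,n}(R). -/

import Mathlib

theorem stmt_1 (p q : ℕ) (hp : p.Prime) (hq : q.Prime) (hpq : p ≠ q)
    (n : ℕ) (hn : 1 < n) :
    let R := ZMod (p ^ n * q)
    let a : R := (p : R) ^ (n - 1) * (q : R)
    let b : R := (p : R)
    -- a and b are adjacent in Γ''_{0,n}(R)
    (∃ m k : ℕ, 1 ≤ m ∧ m ≤ n ∧ 1 ≤ k ∧ k ≤ n ∧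
      a ^ m ∉ Ideal.span {b ^ k} ∧ b ^ k ∉ Ideal.span {a ^ m}) ∧
    -- but not adjacent in Γ''_{0,n-1}(R)
    ¬(∃ m k : ℕ, 1 ≤ m ∧ m ≤ n - 1 ∧ 1 ≤ k ∧ k ≤ n - 1 ∧
      a ^ m ∉ Ideal.span {b ^ k} ∧ b ^ k ∉ Ideal.span {a ^ m}) := by
  obtain ⟨e, rfl⟩ : ∃ e, n = e + 2 := ⟨n - 2, by omega⟩
  intro R a b
  have ha : a = (p : R) ^ (e + 1) * (q : R) := rfl
  have hb : b = (p : R) := rfl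
  have hp0 : 0 < p := hp.pos
  have h0 : (p : R) ^ (e + 2) * (q : R) = 0 := by
    have : ((p ^ (e + 2) * q : ℕ) : R) = 0 := ZMod.natCast_self _
    rw [Nat.cast_mul, Nat.cast_pow] at this
    exact this
  constructor
  · refine ⟨1, e + 2, le_refl 1, by omega, by omega, le_refl _, ?_, ?_⟩
    · rw [pow_one, Ideal.mem_span_singleton]
      rintro ⟨c, hc⟩
      have key : ((p ^ (e + 1) * (q * q) : ℕ) : R) = 0 := by
        rw [Nat.cast_mul, Nat.cast_pow, Nat.cast_mul]
        calc (p : R) ^ (e + 1) * ((q : R) * (q : R))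
            = a * (q : R) := by rw [ha]; ring
          _ = (b ^ (e + 2) * c) * (q : R) := by rw [hc]
          _ = ((p : R) ^ (e + 2) * (q : R)) * c := by rw [hb]; ring
          _ = 0 := by rw [h0, zero_mul]
      rw [ZMod.natCast_eq_zero_iff] at key
      have h1 : p ^ (e + 1) * (p * q) ∣ p ^ (e + 1) * (q * q) := by
        have : p ^ (e + 2) * q = p ^ (e + 1) * (p * q) := by ring
        rwa [this] at key
      have h2 : p * q ∣ q * q := (mul_dvd_mul_iff_left (pow_ne_zero _ hp0.ne')).mp h1
      have h3 : p ∣ q * q := dvd_trans (dvd_mul_right p q) h2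
      have := (Nat.Prime.dvd_mul hp).mp h3
      have : p = q := by
        rcases this with h | h
        · exact (Nat.prime_dvd_prime_iff_eq hp hq).mp h
        · exact (Nat.prime_dvd_prime_iff_eq hp hq).mp h
      exact hpq this
    · rw [pow_one, Ideal.mem_span_singleton]
      rintro ⟨c, hc⟩
      have key : ((p ^ (e + 3) : ℕ) : R) = 0 := by
        push_cast
        calc (p : R) ^ (e + 3)
            = (p : R) * b ^ (e + 2) := by rw [hb]; ring
          _ = (p : R) * (a * c) := by rw [hc]
          _ = ((p : R) ^ (e + 2) * (q : R)) * c := by rw [ha]; ring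
          _ = 0 := by rw [h0, zero_mul]
      rw [ZMod.natCast_eq_zero_iff] at key
      have h1 : q ∣ p ^ (e + 3) := dvd_trans (dvd_mul_left q (p ^ (e + 2))) key
      have h2 : q ∣ p := hq.dvd_of_dvd_pow h1
      exact hpq ((Nat.prime_dvd_prime_iff_eq hq hp).mp h2).symm
  · rintro ⟨m, k, hm1, hm2, hk1, hk2, hmem, -⟩
    apply hmem
    rw [Ideal.mem_span_singleton]
    have hkle : k ≤ (e + 1) * m := le_trans hk2 (Nat.le_mul_of_pos_right _ hm1)
    have hk : k + ((e + 1) * m - k) = (e + 1) * m := by omega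
    refine ⟨(p : R) ^ ((e + 1) * m - k) * (q : R) ^ m, ?_⟩
    calc a ^ m = (p : R) ^ ((e + 1) * m) * (q : R) ^ m := by
          rw [ha, mul_pow, ← pow_mul]
      _ = b ^ k * ((p : R) ^ ((e + 1) * m - k) * (q : R) ^ m) := by
          rw [hb]
          conv_lhs => rw [← hk]
          ring
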